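/- arXiv:1311.0597 — 2 statements merged into one kernel-verified Lean document; each statement's English description precedes it below -/
import Mathlib

section
/- (Lemma 1.) There is an absolute constant C > 0 such that for every s ∈ ℂ with Re(s) ≥ 1 or |Im(s)| ≥ 1 one has |Γ'(s)/Γ(s) − log s| ≤ C, where Γ is the complex Gamma function and log is the principal branch of the logarithm. -/
open Complex MeasureTheory
open scoped Real Classical

noncomputable section

/-- Multiplicity of a zero of `riemannZeta`. -/
def zetaMult (ρ : ℂ) : ℕ :=
  if h : AnalyticAt ℂ riemannZeta ρ then (analyticOrderAt riemannZeta ρ).toNat else 0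

/-- Nontrivial zeros of the Riemann zeta function. -/
def NZ : Set ℂ := {ρ : ℂ | riemannZeta ρ = 0 ∧ 0 < ρ.re ∧ ρ.re < 1}

/-- Montgomery's weight. -/
def w (u : ℝ) : ℝ := 4 / (4 + u ^ 2)

/-- The generalized pair-correlation function. -/
def Fpair (X T τ : ℝ) : ℂ :=
  ∑' ρ : NZ, ∑' ρ' : NZ,
    if ρ.1.im ∈ Set.Icc (-T) T ∧ ρ'.1.im ∈ Set.Icc (-T) T then
      ((zetaMult ρ.1 * zetaMult ρ'.1 : ℕ) : ℂ) *
        (X : ℂ) ^ (Complex.I * ((ρ.1.im : ℂ) - (ρ'.1.im : ℂ))) *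
        ((w (τ * (ρ.1.im - ρ'.1.im)) : ℝ) : ℂ)
    else 0

/-- The function `Φ(X,t,τ)`. -/
def Phi (X t τ : ℝ) : ℝ :=
  ‖∑' ρ : NZ, ((zetaMult ρ.1 : ℕ) : ℂ) * (X : ℂ) ^ (Complex.I * (ρ.1.im : ℂ)) /
      ((1 + τ ^ 2 * (t - ρ.1.im) ^ 2 : ℝ) : ℂ)‖

/-- The weight `a(u,X,τ)`. -/
def afun (u X τ : ℝ) : ℝ := if u ≤ X then (u / X) ^ (1 / τ) else (X / u) ^ (1 / τ)

/-- `S(X,τ)`. -/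
def Sfun (X τ : ℝ) : ℝ :=
  ∑' n : ℕ, (ArithmeticFunction.vonMangoldt n) ^ 2 * (afun n X τ) ^ 2 / n

/-- Chebyshev ψ function. -/
def psi (x : ℝ) : ℝ := ∑ n ∈ Finset.Icc 1 ⌊x⌋₊, ArithmeticFunction.vonMangoldt n

/-- `J(X,τ,θ)`. -/
def J (X τ θ : ℝ) : ℝ := ∫ x in X..(X * (1 + τ)), (psi (x + θ * x) - psi x - θ * x) ^ 2

/-- `c(θ,s)`. -/
def cfun (θ : ℝ) (s : ℂ) : ℂ :=
  if s = 0 then ((Real.log (1 + θ) : ℝ) : ℂ) else (((1 + θ : ℝ) : ℂ) ^ s - 1) / s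

/-- The Conjecture on `F(X,T,τ)`. -/
def Conjecture : Prop :=
  ∀ ε > (0 : ℝ), ∀ M > (1 : ℝ), ∀ δ > (0 : ℝ), ∃ H₀ : ℝ,
    ∀ X T τ : ℝ, H₀ ≤ min X T → max X T ≤ (min X T) ^ M →
      (min X T) ^ (-1 + ε) ≤ τ → τ ≤ 1 →
      ‖Fpair X T τ - (((T / π) * Real.log (min X T) : ℝ) : ℂ)‖ ≤
        δ * ((T / π) * Real.log (min X T))

/-- Hypothesis `K(β)`. -/
def HypK (β : ℝ) : Prop :=
  ∀ ε > (0 : ℝ), ∀ δ > (0 : ℝ), ∃ X₀ : ℝ, ∀ X ≥ X₀, ∀ h : ℝ,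
    X ^ (β + ε) ≤ h → h ≤ X → |psi (X + h) - psi X - h| ≤ δ * h



section GammaLogDerivAux

open Filter Set Topology
open scoped Topology

set_option maxHeartbeats 1000000

lemma exp_sub_pow_le {n : ℕ} (hn : n ≠ 0) {x : ℝ} (hx : 0 ≤ x) (hxn : x ≤ n) :
    |Real.exp (-x) - (1 - x / n) ^ n| ≤ x ^ 2 * Real.exp (-x) / n := by
  have hnpos : (0:ℝ) < n := by positivity
  set t := x / n with ht
  have ht0 : 0 ≤ t := by positivity
  have ht1 : t ≤ 1 := (div_le_one hnpos).mpr hxn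
  have h1 : (1 - t) ^ n ≤ Real.exp (-x) := Real.one_sub_div_pow_le_exp_neg hxn
  rw [_root_.abs_of_nonneg (sub_nonneg.mpr h1)]
  set a := Real.exp t * (1 - t) with ha
  have ha0 : 0 ≤ a := mul_nonneg (Real.exp_nonneg _) (by linarith)
  have ha1 : a ≤ 1 := by
    have h2 : 1 - t ≤ Real.exp (-t) := by
      have := Real.add_one_le_exp (-t); linarith
    calc a ≤ Real.exp t * Real.exp (-t) := by
          apply mul_le_mul_of_nonneg_left h2 (Real.exp_nonneg _)
      _ = 1 := by rw [← Real.exp_add]; simp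
  have ha2 : 1 - t ^ 2 ≤ a := by
    have h3 : 1 + t ≤ Real.exp t := by have := Real.add_one_le_exp t; linarith
    calc 1 - t ^ 2 = (1 + t) * (1 - t) := by ring
      _ ≤ Real.exp t * (1 - t) := mul_le_mul_of_nonneg_right h3 (by linarith)
  have hpow : a ^ n = Real.exp x * (1 - t) ^ n := by
    rw [ha, mul_pow, ← Real.exp_nat_mul]
    congr 2
    rw [ht]
    field_simp
  have hgeom : 1 - a ^ n ≤ n * (1 - a) := by
    have h4 : 1 - a ^ n = (∑ i ∈ Finset.range n, a ^ i) * (1 - a) := by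
      have := geom_sum_mul a n
      linarith [this]
    rw [h4]
    apply mul_le_mul_of_nonneg_right _ (by linarith)
    calc (∑ i ∈ Finset.range n, a ^ i) ≤ ∑ i ∈ Finset.range n, 1 := by
          apply Finset.sum_le_sum; intro i _; exact pow_le_one₀ ha0 ha1
      _ = n := by simp
  have key : Real.exp (-x) - (1 - t) ^ n = Real.exp (-x) * (1 - a ^ n) := by
    rw [hpow]
    rw [mul_sub, mul_one, ← mul_assoc, ← Real.exp_add]
    simp
  rw [key]
  calc Real.exp (-x) * (1 - a ^ n) ≤ Real.exp (-x) * (n * (1 - a)) := by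
        apply mul_le_mul_of_nonneg_left hgeom (Real.exp_nonneg _)
    _ ≤ Real.exp (-x) * (n * t ^ 2) := by
        apply mul_le_mul_of_nonneg_left _ (Real.exp_nonneg _)
        apply mul_le_mul_of_nonneg_left (by linarith) hnpos.le
    _ = x ^ 2 * Real.exp (-x) / n := by
        rw [ht]; field_simp

lemma rpow_between {a b c x : ℝ} (hx : 0 < x) (hac : a ≤ c) (hcb : c ≤ b) :
    x ^ (c - 1) ≤ x ^ (a - 1) + x ^ (b - 1) := by
  rcases le_or_gt 1 x with h | h
  · have : x ^ (c-1) ≤ x ^ (b-1) := Real.rpow_le_rpow_of_exponent_le h (by linarith)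
    have h2 : 0 ≤ x ^ (a-1) := Real.rpow_nonneg hx.le _
    linarith
  · have : x ^ (c-1) ≤ x ^ (a-1) := Real.rpow_le_rpow_of_exponent_ge hx h.le (by linarith)
    have h2 : 0 ≤ x ^ (b-1) := Real.rpow_nonneg hx.le _
    linarith


noncomputable def Ebb (a b : ℝ) (n : ℕ) : ℝ :=
  ∫ x in Ioi (n:ℝ), Real.exp (-x) * (x ^ (a-1) + x ^ (b-1))

lemma h_integrable {a b : ℝ} (ha : 0 < a) (hb : 0 < b) :
    IntegrableOn (fun x : ℝ => Real.exp (-x) * (x ^ (a-1) + x ^ (b-1))) (Ioi 0) := by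
  have h1 := (Real.GammaIntegral_convergent ha).add (Real.GammaIntegral_convergent hb)
  refine MeasureTheory.IntegrableOn.congr_fun h1 ?_ measurableSet_Ioi
  intro x _; simp [mul_add]

lemma tendsto_Ebb {a b : ℝ} (ha : 0 < a) (hb : 0 < b) :
    Tendsto (fun n : ℕ => Ebb a b n) atTop (𝓝 0) := by
  set h : ℝ → ℝ := fun x => Real.exp (-x) * (x ^ (a-1) + x ^ (b-1)) with hh
  have hint : IntegrableOn h (Ioi 0) := h_integrable ha hb
  have key : ∀ n : ℕ, Ebb a b n = (∫ x in Ioi (0:ℝ), h x) - ∫ x in (0:ℝ)..(n:ℝ), h x := by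
    intro n
    have hn0 : (0:ℝ) ≤ n := Nat.cast_nonneg n
    rw [intervalIntegral.integral_of_le hn0]
    have hsplit : ∫ x in Ioi (0:ℝ), h x =
        (∫ x in Ioc (0:ℝ) n, h x) + ∫ x in Ioi (n:ℝ), h x := by
      rw [← setIntegral_union (Set.Ioc_disjoint_Ioi le_rfl) measurableSet_Ioi
        (hint.mono_set Ioc_subset_Ioi_self) (hint.mono_set (Ioi_subset_Ioi hn0)),
        Ioc_union_Ioi_eq_Ioi hn0]
    rw [hsplit, Ebb]; ring
  simp_rw [key]
  have h2 := intervalIntegral_tendsto_integral_Ioi (μ := volume) 0 hint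
    (tendsto_natCast_atTop_atTop (R := ℝ))
  have := (tendsto_const_nhds (x := ∫ x in Ioi (0:ℝ), h x) (f := atTop)).sub h2
  simpa using this

lemma phi_pointwise {a b n x : ℝ} (hx : 0 < x) :
    Real.exp (-x) * (x ^ (a-1) + x ^ (b-1)) * (x^2 / n)
      = (Real.exp (-x) * x ^ (a+2-1) + Real.exp (-x) * x ^ (b+2-1)) / n := by
  have h2 : (x:ℝ) ^ (2:ℕ) = x ^ ((2:ℝ)) := by
    rw [← Real.rpow_natCast x 2]; norm_num
  rw [show a+2-1 = (a-1)+2 by ring, show b+2-1 = (b-1)+2 by ring,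
    Real.rpow_add hx, Real.rpow_add hx, show ((2:ℝ)) = ((2:ℕ):ℝ) by norm_num,
    Real.rpow_natCast]
  ring

lemma strip_bound {a b : ℝ} (ha : 0 < a) {n : ℕ} (hn : n ≠ 0) {s : ℂ}
    (hsa : a ≤ s.re) (hsb : s.re ≤ b) :
    ‖Complex.Gamma s - Complex.GammaSeq s n‖ ≤
      (Real.Gamma (a+2) + Real.Gamma (b+2)) / n + Ebb a b n := by
  have hs : 0 < s.re := lt_of_lt_of_le ha hsa
  have hb : 0 < b := lt_of_lt_of_le hs hsb
  have hnR : (0:ℝ) < n := by positivity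
  set g : ℝ → ℂ := fun x => (Real.exp (-x) : ℝ) * (x:ℂ) ^ (s-1) with hg_def
  set f : ℝ → ℂ :=
    indicator (Ioc 0 (n:ℝ)) (fun x : ℝ => ((1 - x/n) ^ n : ℝ) * (x:ℂ) ^ (s-1)) with hf_def
  have hg_int : IntegrableOn g (Ioi 0) := Complex.GammaIntegral_convergent hs
  have hf_int : IntegrableOn f (Ioi 0) := by
    rw [hf_def, IntegrableOn, integrable_indicator_iff measurableSet_Ioc, IntegrableOn,
      Measure.restrict_restrict_of_subset Ioc_subset_Ioi_self, ← IntegrableOn,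
      ← intervalIntegrable_iff_integrableOn_Ioc_of_le hnR.le]
    apply IntervalIntegrable.continuousOn_mul
    · exact intervalIntegral.intervalIntegrable_cpow' (by simp only [Complex.sub_re, Complex.one_re]; linarith : (-1:ℝ) < (s-1).re)
    · exact (RCLike.continuous_ofReal.comp
        ((continuous_const.sub (continuous_id'.div_const (n : ℝ))).pow n)).continuousOn
  have hGam : Complex.Gamma s = ∫ x in Ioi (0:ℝ), g x := by
    rw [Complex.Gamma_eq_integral hs]; rfl
  have hGseq : Complex.GammaSeq s n = ∫ x in Ioi (0:ℝ), f x := by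
    rw [Complex.GammaSeq_eq_approx_Gamma_integral hs hn,
      intervalIntegral.integral_of_le hnR.le, hf_def,
      integral_indicator measurableSet_Ioc,
      Measure.restrict_restrict_of_subset Ioc_subset_Ioi_self]
  set φ : ℝ → ℝ := fun x =>
    Real.exp (-x) * (x ^ (a-1) + x ^ (b-1)) * (x^2 / n) +
      indicator (Ioi (n:ℝ)) (fun x => Real.exp (-x) * (x ^ (a-1) + x ^ (b-1))) x with hφ_def
  have hA_int : IntegrableOn
      (fun x : ℝ => Real.exp (-x) * (x ^ (a-1) + x ^ (b-1)) * (x^2 / n)) (Ioi 0) := by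
    have h2 := ((Real.GammaIntegral_convergent (by linarith : (0:ℝ) < a + 2)).add
      (Real.GammaIntegral_convergent (by linarith : (0:ℝ) < b + 2))).div_const (n:ℝ)
    refine MeasureTheory.IntegrableOn.congr_fun h2 ?_ measurableSet_Ioi
    intro x hx
    simp only [mem_Ioi] at hx
    exact (phi_pointwise (a := a) (b := b) (n := (n:ℝ)) hx).symm
  have hT_int : IntegrableOn
      (fun x : ℝ => indicator (Ioi (n:ℝ))
        (fun x => Real.exp (-x) * (x ^ (a-1) + x ^ (b-1))) x) (Ioi 0) := by
    rw [IntegrableOn, integrable_indicator_iff measurableSet_Ioi, IntegrableOn,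
      Measure.restrict_restrict_of_subset (Ioi_subset_Ioi hnR.le)]
    exact (h_integrable ha hb).mono_set (Ioi_subset_Ioi hnR.le)
  have hφ_int : IntegrableOn φ (Ioi 0) := by
    have := MeasureTheory.Integrable.add hA_int hT_int
    exact this.congr (Filter.Eventually.of_forall fun x => rfl)
  -- pointwise bound
  have hpt : ∀ x ∈ Ioi (0:ℝ), ‖g x - f x‖ ≤ φ x := by
    intro x hx
    rw [mem_Ioi] at hx
    have hxr : x ^ (s.re - 1) ≤ x ^ (a-1) + x ^ (b-1) := rpow_between hx hsa hsb
    have hxrpos : (0:ℝ) ≤ x ^ (s.re - 1) := Real.rpow_nonneg hx.le _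
    by_cases hxn : x ≤ n
    · have hfx : f x = (((1 - x/n) ^ n : ℝ) : ℂ) * (x:ℂ) ^ (s-1) :=
        indicator_of_mem (Set.mem_Ioc.mpr ⟨hx, hxn⟩) _
      have : g x - f x = ((Real.exp (-x) - (1 - x/n) ^ n : ℝ) : ℂ) * (x:ℂ) ^ (s-1) := by
        rw [hfx, hg_def]; push_cast; ring
      rw [this, norm_mul, Complex.norm_real, Real.norm_eq_abs,
        Complex.norm_cpow_eq_rpow_re_of_pos hx, sub_re, one_re]
      have h1 : |Real.exp (-x) - (1 - x/n) ^ n| * x ^ (s.re - 1) ≤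
          (x^2 * Real.exp (-x) / n) * (x ^ (a-1) + x ^ (b-1)) := by
        apply mul_le_mul (exp_sub_pow_le hn hx.le hxn) hxr hxrpos (div_nonneg (by positivity) hnR.le)
      refine h1.trans ?_
      simp only [hφ_def]
      have h0 : (0:ℝ) ≤ indicator (Ioi (n:ℝ))
          (fun x => Real.exp (-x) * (x ^ (a-1) + x ^ (b-1))) x := by
        apply indicator_nonneg; intro y hy
        have hy0 : (0:ℝ) ≤ y := le_trans hnR.le (le_of_lt (mem_Ioi.mp hy))
        exact mul_nonneg (Real.exp_nonneg _)
          (add_nonneg (Real.rpow_nonneg hy0 _) (Real.rpow_nonneg hy0 _))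
      have : x^2 * Real.exp (-x) / n * (x ^ (a-1) + x ^ (b-1)) =
          Real.exp (-x) * (x ^ (a-1) + x ^ (b-1)) * (x^2 / n) := by ring
      rw [this]; linarith
    · push_neg at hxn
      have hfx : f x = 0 := indicator_of_notMem (by simp [hxn.not_ge]) _
      rw [hfx, sub_zero, hg_def, norm_mul, Complex.norm_real, Real.norm_eq_abs,
        Complex.norm_cpow_eq_rpow_re_of_pos hx, sub_re, one_re,
        _root_.abs_of_nonneg (Real.exp_nonneg _)]
      have h1 : Real.exp (-x) * x ^ (s.re - 1) ≤ Real.exp (-x) * (x ^ (a-1) + x ^ (b-1)) :=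
        mul_le_mul_of_nonneg_left hxr (Real.exp_nonneg _)
      refine h1.trans ?_
      simp only [hφ_def]
      have h2 : indicator (Ioi (n:ℝ)) (fun x => Real.exp (-x) * (x ^ (a-1) + x ^ (b-1))) x
          = Real.exp (-x) * (x ^ (a-1) + x ^ (b-1)) := indicator_of_mem hxn _
      have h3 : (0:ℝ) ≤ Real.exp (-x) * (x ^ (a-1) + x ^ (b-1)) * (x^2/n) := by positivity
      rw [h2]; linarith
  -- assemble
  have step1 : ‖Complex.Gamma s - Complex.GammaSeq s n‖ ≤ ∫ x in Ioi (0:ℝ), ‖g x - f x‖ := by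
    rw [hGam, hGseq, ← integral_sub hg_int hf_int]
    exact norm_integral_le_integral_norm _
  have step2 : ∫ x in Ioi (0:ℝ), ‖g x - f x‖ ≤ ∫ x in Ioi (0:ℝ), φ x := by
    apply setIntegral_mono_on ((hg_int.sub hf_int).norm) hφ_int measurableSet_Ioi hpt
  have step3 : ∫ x in Ioi (0:ℝ), φ x =
      (Real.Gamma (a+2) + Real.Gamma (b+2)) / n + Ebb a b n := by
    rw [hφ_def, integral_add hA_int hT_int]
    congr 1
    · have hcong : ∫ x in Ioi (0:ℝ),
          Real.exp (-x) * (x ^ (a-1) + x ^ (b-1)) * (x^2 / n) =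
          ∫ x in Ioi (0:ℝ),
          (Real.exp (-x) * x ^ (a+2-1) + Real.exp (-x) * x ^ (b+2-1)) / n := by
        apply setIntegral_congr_fun measurableSet_Ioi
        intro x hx
        rw [mem_Ioi] at hx
        exact phi_pointwise hx
      rw [hcong, integral_div, integral_add (Real.GammaIntegral_convergent (by linarith))
        (Real.GammaIntegral_convergent (by linarith)),
        ← Real.Gamma_eq_integral (by linarith : (0:ℝ) < a + 2),
        ← Real.Gamma_eq_integral (by linarith : (0:ℝ) < b + 2)]
    · rw [integral_indicator measurableSet_Ioi,
        Measure.restrict_restrict_of_subset (Ioi_subset_Ioi hnR.le)]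
      rfl
  linarith

lemma gammaSeq_tendstoUniformlyOn {a b : ℝ} (ha : 0 < a) (hab : a ≤ b) :
    TendstoUniformlyOn (fun (n:ℕ) (s:ℂ) => Complex.GammaSeq s n) Complex.Gamma atTop
      {s : ℂ | a ≤ s.re ∧ s.re ≤ b} := by
  rw [Metric.tendstoUniformlyOn_iff]
  intro ε hε
  have hD : Tendsto (fun n : ℕ => (Real.Gamma (a+2) + Real.Gamma (b+2))/(n:ℝ) + Ebb a b n)
      atTop (𝓝 0) := by
    have h1 := tendsto_const_div_atTop_nhds_zero_nat (Real.Gamma (a+2) + Real.Gamma (b+2))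
    simpa using h1.add (tendsto_Ebb ha (lt_of_lt_of_le ha hab))
  filter_upwards [hD.eventually_lt_const hε, eventually_ge_atTop 1] with n hn hn1 s hs
  rw [dist_eq_norm]
  exact lt_of_le_of_lt (strip_bound ha (Nat.one_le_iff_ne_zero.mp hn1) hs.1 hs.2) hn

lemma gammaSeq_tlu :
    TendstoLocallyUniformlyOn (fun (n:ℕ) (s:ℂ) => Complex.GammaSeq s n) Complex.Gamma atTop
      {s : ℂ | 0 < s.re} := by
  have hopen : IsOpen {s : ℂ | 0 < s.re} := isOpen_lt continuous_const Complex.continuous_re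
  rw [tendstoLocallyUniformlyOn_iff_forall_isCompact hopen]
  intro K hK hKc
  rcases K.eq_empty_or_nonempty with rfl | hne
  · exact tendstoUniformlyOn_empty
  obtain ⟨z₁, hz₁K, hz₁⟩ := hKc.exists_isMinOn hne Complex.continuous_re.continuousOn
  obtain ⟨z₂, hz₂K, hz₂⟩ := hKc.exists_isMaxOn hne Complex.continuous_re.continuousOn
  have ha : 0 < z₁.re := hK hz₁K
  refine (gammaSeq_tendstoUniformlyOn ha (hz₁ hz₂K)).mono ?_
  intro z hz
  exact ⟨hz₁ hz, hz₂ hz⟩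

lemma logDeriv_gammaSeq {s : ℂ} (hs : ∀ j : ℕ, s + j ≠ 0) {n : ℕ} (hn : n ≠ 0) :
    logDeriv (fun z => Complex.GammaSeq z n) s =
      Complex.log n - ∑ j ∈ Finset.range (n+1), (s + j)⁻¹ := by
  have hnC : (n:ℂ) ≠ 0 := Nat.cast_ne_zero.mpr hn
  have hfac : (n.factorial : ℂ) ≠ 0 := Nat.cast_ne_zero.mpr n.factorial_ne_zero
  have hcpow : (n:ℂ) ^ s ≠ 0 := by
    simp [Complex.cpow_eq_zero_iff, hnC]
  have h1 : (n:ℂ) ^ s * (n.factorial : ℂ) ≠ 0 := mul_ne_zero hcpow hfac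
  have h2 : (∏ j ∈ Finset.range (n+1), (s + (j:ℂ))) ≠ 0 :=
    Finset.prod_ne_zero_iff.mpr fun j _ => hs j
  have d1 : DifferentiableAt ℂ (fun z : ℂ => (n:ℂ) ^ z * (n.factorial : ℂ)) s :=
    (differentiableAt_id.const_cpow (Or.inl hnC)).mul_const _
  have d2 : DifferentiableAt ℂ (fun z : ℂ => ∏ j ∈ Finset.range (n+1), (z + (j:ℂ))) s := by
    apply DifferentiableAt.fun_finsetProd
    intro j _
    exact differentiableAt_id.add_const _
  have heq : (fun z => Complex.GammaSeq z n) =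
      fun z => ((n:ℂ) ^ z * (n.factorial : ℂ)) / ∏ j ∈ Finset.range (n+1), (z + (j:ℂ)) := rfl
  rw [heq, logDeriv_div s h1 h2 d1 d2, logDeriv_mul_const s _ hfac,
    logDeriv_prod (f := fun (j:ℕ) (z:ℂ) => z + (j:ℂ)) (fun j _ => hs j) (fun j _ => differentiableAt_id.add_const _)]
  congr 1
  · rw [logDeriv]
    simp only [Pi.div_apply]
    rw [(hasStrictDerivAt_const_cpow (Or.inl hnC)).hasDerivAt.deriv]
    rw [mul_comm, mul_div_assoc, div_self hcpow, mul_one]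
  · apply Finset.sum_congr rfl
    intro j _
    rw [logDeriv]
    simp only [Pi.div_apply]
    rw [show (fun z : ℂ => z + (j:ℂ)) = fun z : ℂ => id z + (j:ℂ) from rfl,
      deriv_add_const, deriv_id]
    simp

lemma tendsto_logDeriv_gamma_of_re_pos {s : ℂ} (hs : 0 < s.re) :
    Tendsto (fun n : ℕ => Complex.log n - ∑ j ∈ Finset.range (n+1), (s + (j:ℂ))⁻¹)
      atTop (𝓝 (logDeriv Complex.Gamma s)) := by
  have hsj : ∀ j : ℕ, s + (j:ℂ) ≠ 0 := by
    intro j h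
    have := congrArg Complex.re h
    simp only [Complex.add_re, Complex.natCast_re, Complex.zero_re] at this
    have hj : (0:ℝ) ≤ j := Nat.cast_nonneg j
    linarith
  have hGne : Complex.Gamma s ≠ 0 := by
    apply Complex.Gamma_ne_zero
    intro m h
    have := congrArg Complex.re h
    simp only [Complex.neg_re, Complex.natCast_re] at this
    have hm : (0:ℝ) ≤ m := Nat.cast_nonneg m
    linarith
  have hopen : IsOpen {s : ℂ | 0 < s.re} := isOpen_lt continuous_const Complex.continuous_re
  have hdiff : ∀ᶠ n : ℕ in atTop,
      DifferentiableOn ℂ (fun z => Complex.GammaSeq z n) {s : ℂ | 0 < s.re} := by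
    filter_upwards [eventually_ge_atTop 1] with n hn
    intro z hz
    have hzj : ∀ j : ℕ, z + (j:ℂ) ≠ 0 := by
      intro j h
      have := congrArg Complex.re h
      simp only [Complex.add_re, Complex.natCast_re, Complex.zero_re] at this
      have hj : (0:ℝ) ≤ j := Nat.cast_nonneg j
      have := mem_setOf_eq ▸ hz
      linarith [hz]
    have hnC : (n:ℂ) ≠ 0 := Nat.cast_ne_zero.mpr (Nat.one_le_iff_ne_zero.mp hn)
    have : DifferentiableAt ℂ (fun z => Complex.GammaSeq z n) z := by
      have heq : (fun z => Complex.GammaSeq z n) =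
          fun z => ((n:ℂ) ^ z * (n.factorial : ℂ)) / ∏ j ∈ Finset.range (n+1), (z + (j:ℂ)) := rfl
      rw [heq]
      apply DifferentiableAt.div
      · exact (differentiableAt_id.const_cpow (Or.inl hnC)).mul_const _
      · exact DifferentiableAt.fun_finsetProd fun j _ => differentiableAt_id.add_const _
      · exact Finset.prod_ne_zero_iff.mpr fun j _ => hzj j
    exact this.differentiableWithinAt
  have h := Complex.logDeriv_tendsto (f := fun (n:ℕ) z => Complex.GammaSeq z n) (g := Complex.Gamma)
    hopen (x := s) hs gammaSeq_tlu hdiff hGne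
  apply h.congr'
  filter_upwards [eventually_ge_atTop 1] with n hn
  exact logDeriv_gammaSeq hsj (Nat.one_le_iff_ne_zero.mp hn)

lemma tendsto_inv_shift (c : ℂ) :
    Tendsto (fun n : ℕ => (c + (n:ℂ))⁻¹) atTop (𝓝 0) := by
  rw [tendsto_zero_iff_norm_tendsto_zero]
  simp only [norm_inv]
  apply Tendsto.inv_tendsto_atTop
  apply tendsto_atTop_mono (fun n : ℕ => ?_)
    (tendsto_atTop_add_const_right atTop (-‖c‖) (tendsto_natCast_atTop_atTop (R := ℝ)))
  have h1 : ‖(n:ℂ)‖ ≤ ‖c + n‖ + ‖c‖ := by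
    calc ‖(n:ℂ)‖ = ‖(c + n) + (-c)‖ := by ring_nf
      _ ≤ ‖c + n‖ + ‖(-c)‖ := norm_add_le _ _
      _ = ‖c + n‖ + ‖c‖ := by rw [norm_neg]
  have h2 : ‖((n:ℕ):ℂ)‖ = (n:ℝ) := by
    rw [Complex.norm_natCast]
  linarith [h1, h2.ge]

lemma logDeriv_gamma_rec {s : ℂ} (hs : ∀ j : ℕ, s + (j:ℂ) ≠ 0) :
    logDeriv Complex.Gamma s = logDeriv Complex.Gamma (s+1) - s⁻¹ := by
  have hs0 : s ≠ 0 := by simpa using hs 0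
  have hsne : ∀ m : ℕ, s ≠ -(m:ℂ) := by
    intro m h
    exact hs m (by rw [h]; ring)
  have hGne : Complex.Gamma s ≠ 0 := Complex.Gamma_ne_zero hsne
  have hGdiff : DifferentiableAt ℂ Complex.Gamma s := Complex.differentiableAt_Gamma s hsne
  have heq : (fun z : ℂ => Complex.Gamma (z+1)) =ᶠ[𝓝 s] fun z : ℂ => z * Complex.Gamma z := by
    filter_upwards [eventually_ne_nhds hs0] with z hz
    exact Complex.Gamma_add_one z hz
  have hL : logDeriv (fun z : ℂ => Complex.Gamma (z+1)) s
      = logDeriv Complex.Gamma (s+1) := by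
    rw [logDeriv, logDeriv, Pi.div_apply, Pi.div_apply]
    congr 1
    exact deriv_comp_add_const _ _ _
  have hR : logDeriv (fun z : ℂ => z * Complex.Gamma z) s = s⁻¹ + logDeriv Complex.Gamma s := by
    rw [logDeriv_mul (f := fun z : ℂ => z) s hs0 hGne differentiableAt_id hGdiff]
    simp
  have hLR : logDeriv (fun z : ℂ => Complex.Gamma (z+1)) s
      = logDeriv (fun z : ℂ => z * Complex.Gamma z) s := by
    rw [logDeriv, logDeriv, Pi.div_apply, Pi.div_apply, heq.deriv_eq, heq.eq_of_nhds]
  rw [hL] at hLR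
  rw [hLR, hR]
  ring

lemma tendsto_logDeriv_gamma {s : ℂ} (hs : ∀ j : ℕ, s + (j:ℂ) ≠ 0) :
    Tendsto (fun n : ℕ => Complex.log n - ∑ j ∈ Finset.range (n+1), (s + (j:ℂ))⁻¹)
      atTop (𝓝 (logDeriv Complex.Gamma s)) := by
  obtain ⟨m, hm⟩ := exists_nat_gt (-s.re)
  induction m generalizing s with
  | zero =>
      apply tendsto_logDeriv_gamma_of_re_pos
      simpa using hm
  | succ m ih =>
      rcases lt_or_ge 0 s.re with hpos | hneg
      · exact tendsto_logDeriv_gamma_of_re_pos hpos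
      · have hs1 : ∀ j : ℕ, (s+1) + (j:ℂ) ≠ 0 := by
          intro j
          have := hs (j+1)
          push_cast at this ⊢
          intro h; apply this; rw [← h]; ring
        have hm1 : -(s+1).re < m := by
          simp only [Complex.add_re, Complex.one_re]
          push_cast at hm
          linarith
        have IH := ih hs1 hm1
        have hrec := logDeriv_gamma_rec hs
        rw [hrec]
        have hkey : ∀ n : ℕ,
            Complex.log n - ∑ j ∈ Finset.range (n+1), (s + (j:ℂ))⁻¹ =
            (Complex.log n - ∑ j ∈ Finset.range (n+1), ((s+1) + (j:ℂ))⁻¹)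
              + (((s+1) + (n:ℂ))⁻¹ - s⁻¹) := by
          intro n
          have e1 : ∑ j ∈ Finset.range (n+1), (s + (j:ℂ))⁻¹
              = ∑ j ∈ Finset.range n, ((s+1) + (j:ℂ))⁻¹ + s⁻¹ := by
            rw [Finset.sum_range_succ' (fun j => (s + (j:ℂ))⁻¹) n]
            congr 1
            · apply Finset.sum_congr rfl
              intro j _
              congr 1
              push_cast
              ring
            · simp
          have e2 : ∑ j ∈ Finset.range (n+1), ((s+1) + (j:ℂ))⁻¹
              = ∑ j ∈ Finset.range n, ((s+1) + (j:ℂ))⁻¹ + ((s+1) + (n:ℂ))⁻¹ :=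
            Finset.sum_range_succ _ n
          rw [e1, e2]
          ring
        simp_rw [hkey]
        have h0 : Tendsto (fun n : ℕ => ((s+1) + (n:ℂ))⁻¹ - s⁻¹) atTop (𝓝 (0 - s⁻¹)) :=
          (tendsto_inv_shift (s+1)).sub_const _
        have := IH.add h0
        simpa [sub_eq_add_neg] using this

lemma sum_inv_sq (N : ℕ) : ∑ i ∈ Finset.range N, (1:ℝ)/((i:ℝ)^2+1) ≤ 3 := by
  cases N with
  | zero => norm_num
  | succ M =>
    rw [Finset.sum_range_succ' (fun i => (1:ℝ)/((i:ℝ)^2+1)) M]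
    simp only [Nat.cast_add, Nat.cast_one, Nat.cast_zero]
    have h1 : ∑ i ∈ Finset.range M, (1:ℝ)/(((i:ℝ)+1)^2+1) ≤
        ∑ i ∈ Finset.range M, (-(2/(((i:ℝ)+1)+1)) - -(2/((i:ℝ)+1))) := by
      apply Finset.sum_le_sum
      intro i _
      have hi1 : (0:ℝ) < (i:ℝ)+1 := by positivity
      have hi2 : (0:ℝ) < (i:ℝ)+1+1 := by positivity
      have : -(2/(((i:ℝ)+1)+1)) - -(2/((i:ℝ)+1)) = 2/((i:ℝ)+1) - 2/((i:ℝ)+1+1) := by ring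
      rw [this, div_sub_div _ _ (ne_of_gt hi1) (ne_of_gt hi2),
        div_le_div_iff₀ (by positivity) (by positivity)]
      nlinarith [sq_nonneg ((i:ℝ))]
    have h2 : ∑ i ∈ Finset.range M, (-(2/(((i:ℝ)+1)+1)) - -(2/((i:ℝ)+1))) ≤ 2 := by
      have hts := Finset.sum_range_sub (fun i => -(2/((i:ℝ)+1))) M
      simp only [Nat.cast_add, Nat.cast_one, Nat.cast_zero] at hts
      rw [hts]
      have : (0:ℝ) ≤ 2/((M:ℝ)+1) := by positivity
      norm_num
      linarith
    have h3 : (1:ℝ)/((0:ℝ)^2+1) = 1 := by norm_num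
    linarith [h1.trans h2]

lemma shifted_sum_bound (x : ℝ) (N : ℕ) :
    ∑ k ∈ Finset.range N, (1:ℝ)/((x+(k:ℝ))^2+1) ≤ 6 := by
  set k₀ : ℕ := ⌈max 0 (-x)⌉₊ with hk₀
  have hx0 : 0 ≤ x + k₀ := by
    have := Nat.le_ceil (max 0 (-x))
    have h2 : -x ≤ (k₀:ℝ) := le_trans (le_max_right _ _) this
    linarith
  have hx1 : k₀ ≠ 0 → x + k₀ ≤ 1 := by
    intro hne
    have hxneg : ¬ (max 0 (-x) = 0) := by
      intro h; apply hne; rw [hk₀, h]; simp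
    have hmax : max 0 (-x) = -x := by
      rcases max_choice 0 (-x) with h | h
      · exact absurd h hxneg
      · exact h
    have hc := Nat.ceil_lt_add_one (le_max_left 0 (-x))
    have : (k₀:ℝ) < (0 ⊔ -x) + 1 := by exact_mod_cast hc
    rw [hmax] at this
    linarith
  have hnn : ∀ k : ℕ, (0:ℝ) ≤ 1/((x+(k:ℝ))^2+1) := by
    intro k; positivity
  calc ∑ k ∈ Finset.range N, (1:ℝ)/((x+(k:ℝ))^2+1)
      ≤ ∑ k ∈ Finset.range (k₀ + N), (1:ℝ)/((x+(k:ℝ))^2+1) := by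
        apply Finset.sum_le_sum_of_subset_of_nonneg
        · apply Finset.range_subset_range.mpr; omega
        · intro k _ _; exact hnn k
    _ = ∑ k ∈ Finset.range k₀, (1:ℝ)/((x+(k:ℝ))^2+1)
        + ∑ i ∈ Finset.range N, (1:ℝ)/((x+((k₀+i:ℕ):ℝ))^2+1) :=
        Finset.sum_range_add _ k₀ N
    _ ≤ 3 + 3 := by
        gcongr
        · -- part 1 : k < k₀
          rw [← Finset.sum_range_reflect]
          have hle : ∀ j ∈ Finset.range k₀, (1:ℝ)/((x+((k₀-1-j:ℕ):ℝ))^2+1) ≤ 1/((j:ℝ)^2+1) := by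
            intro j hj
            rw [Finset.mem_range] at hj
            have hcast : ((k₀-1-j:ℕ):ℝ) = (k₀:ℝ) - 1 - j := by
              have he : k₀ - 1 - j + j + 1 = k₀ := by omega
              have := congrArg (fun n : ℕ => (n:ℝ)) he
              push_cast at this
              linarith
            rw [hcast]
            have hk0ne : k₀ ≠ 0 := by omega
            have h1 : x + ((k₀:ℝ) - 1 - j) ≤ -(j:ℝ) := by
              have := hx1 hk0ne
              linarith
            have h2 : (x + ((k₀:ℝ)-1-j))^2 ≥ (j:ℝ)^2 := by nlinarith [sq_nonneg (x + ((k₀:ℝ)-1-j) + j)]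
            apply div_le_div_of_nonneg_left (by norm_num) (by positivity)
            linarith
          exact le_trans (Finset.sum_le_sum hle) (sum_inv_sq k₀)
        · -- part 2 : shifted
          have hle : ∀ i ∈ Finset.range N, (1:ℝ)/((x+((k₀+i:ℕ):ℝ))^2+1) ≤ 1/((i:ℝ)^2+1) := by
            intro i _
            have hcast : ((k₀+i:ℕ):ℝ) = (k₀:ℝ) + i := by push_cast; ring
            rw [hcast]
            have h1 : (i:ℝ) ≤ x + ((k₀:ℝ) + i) := by linarith
            have h2 : ((i:ℝ))^2 ≤ (x + ((k₀:ℝ)+i))^2 := by nlinarith [Nat.cast_nonneg (α := ℝ) i]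
            apply div_le_div_of_nonneg_left (by norm_num) (by positivity)
            linarith
          exact le_trans (Finset.sum_le_sum hle) (sum_inv_sq N)
    _ = 6 := by norm_num

lemma region_norm_ge_one {z : ℂ} (hz : 1 ≤ z.re ∨ 1 ≤ |z.im|) : 1 ≤ ‖z‖ := by
  rcases hz with h | h
  · exact le_trans h (le_trans (le_abs_self _) (Complex.abs_re_le_norm z))
  · exact le_trans h (Complex.abs_im_le_norm z)

lemma region_shift_norm {z : ℂ} (hz : 1 ≤ z.re ∨ 1 ≤ |z.im|) {τ : ℝ}
    (hτ0 : 0 ≤ τ) (hτ1 : τ ≤ 1) : ‖z‖ / 2 ≤ ‖z + τ‖ := by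
  rcases hz with h | h
  · have hsq : ‖z‖ ^ 2 ≤ ‖z + τ‖ ^ 2 := by
      rw [Complex.sq_norm, Complex.sq_norm, Complex.normSq_apply, Complex.normSq_apply]
      simp only [Complex.add_re, Complex.add_im, Complex.ofReal_re, Complex.ofReal_im, add_zero]
      nlinarith
    have h1 := norm_nonneg z
    have h2 := norm_nonneg (z + τ)
    nlinarith
  · have h1 : 1 ≤ ‖z + τ‖ := by
      have him : (z + (τ:ℂ)).im = z.im := by simp
      calc (1:ℝ) ≤ |z.im| := h
        _ = |(z + (τ:ℂ)).im| := by rw [him]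
        _ ≤ ‖z + τ‖ := Complex.abs_im_le_norm _
    have h2 : ‖z‖ - 1 ≤ ‖z + τ‖ := by
      have h3 : ‖z‖ ≤ ‖z + τ‖ + ‖(τ:ℂ)‖ := by
        calc ‖z‖ = ‖(z + τ) + (-(τ:ℂ))‖ := by ring_nf
          _ ≤ ‖z + τ‖ + ‖-(τ:ℂ)‖ := norm_add_le _ _
          _ = ‖z + τ‖ + ‖(τ:ℂ)‖ := by rw [norm_neg]
      have h4 : ‖(τ:ℂ)‖ ≤ 1 := by
        rw [Complex.norm_real, Real.norm_eq_abs, _root_.abs_of_nonneg hτ0]; exact hτ1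
      linarith
    rcases le_or_gt (‖z‖) 2 with h5 | h5
    · linarith
    · linarith

lemma region_slit {z : ℂ} (hz : 1 ≤ z.re ∨ 1 ≤ |z.im|) {τ : ℝ} (hτ0 : 0 ≤ τ) :
    z + (τ:ℂ) ∈ Complex.slitPlane := by
  rw [Complex.mem_slitPlane_iff]
  rcases hz with h | h
  · left; simp only [Complex.add_re, Complex.ofReal_re]; linarith
  · right; simp only [Complex.add_im, Complex.ofReal_im, add_zero]
    intro h0; rw [h0] at h; simp at h; linarith

lemma term_bound {z : ℂ} (hz : 1 ≤ z.re ∨ 1 ≤ |z.im|) :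
    ‖Complex.log (z+1) - Complex.log z - z⁻¹‖ ≤ 2 / ‖z‖ ^ 2 := by
  have hz1 : 1 ≤ ‖z‖ := region_norm_ge_one hz
  have hzpos : 0 < ‖z‖ := by linarith
  have hzne : z ≠ 0 := by
    intro h; rw [h] at hzpos; simp at hzpos
  have hshiftne : ∀ τ : ℝ, 0 ≤ τ → τ ≤ 1 → z + (τ:ℂ) ≠ 0 := by
    intro τ h0 h1 h
    have := region_shift_norm hz h0 h1
    rw [h] at this; simp at this; linarith
  set f : ℝ → ℂ := fun τ => Complex.log (z + τ) - τ * z⁻¹ with hf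
  have hderiv : ∀ τ ∈ Icc (0:ℝ) 1,
      HasDerivWithinAt f ((z + (τ:ℂ))⁻¹ - z⁻¹) (Icc 0 1) τ := by
    intro τ hτ
    have h1 : HasDerivAt (fun y : ℝ => Complex.log (z + y)) (z + (τ:ℂ))⁻¹ τ := by
      have ha : HasDerivAt (fun w : ℂ => z + w) 1 (τ:ℂ) := (hasDerivAt_id _).const_add z
      have hb := (Complex.hasDerivAt_log (region_slit hz hτ.1)).comp (τ:ℂ) ha
      simpa using hb.comp_ofReal
    have h2 : HasDerivAt (fun y : ℝ => (y:ℂ) * z⁻¹) z⁻¹ τ := by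
      have := ((hasDerivAt_id τ).ofReal_comp).mul_const z⁻¹
      simpa using this
    exact ((h1.sub h2)).hasDerivWithinAt
  have hbound : ∀ τ ∈ Ico (0:ℝ) 1, ‖(z + (τ:ℂ))⁻¹ - z⁻¹‖ ≤ 2 / ‖z‖ ^ 2 := by
    intro τ hτ
    have hne := hshiftne τ hτ.1 (le_of_lt hτ.2)
    rw [inv_sub_inv hne hzne]
    have hnorm : ‖(z - (z + (τ:ℂ))) / ((z + (τ:ℂ)) * z)‖ =
        |τ| / (‖z + τ‖ * ‖z‖) := by
      rw [norm_div, norm_mul]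
      congr 1
      have : z - (z + (τ:ℂ)) = -(τ:ℂ) := by ring
      rw [this]
      simp
    rw [hnorm]
    have hs := region_shift_norm hz hτ.1 (le_of_lt hτ.2)
    have hden : ‖z‖ / 2 * ‖z‖ ≤ ‖z + τ‖ * ‖z‖ := by
      apply mul_le_mul_of_nonneg_right hs (norm_nonneg _)
    have hdenpos : 0 < ‖z‖ / 2 * ‖z‖ := by positivity
    calc |τ| / (‖z + τ‖ * ‖z‖)
        ≤ 1 / (‖z‖ / 2 * ‖z‖) := by
          apply div_le_div₀ (by norm_num) _ hdenpos hden
          rw [_root_.abs_of_nonneg hτ.1]; exact le_of_lt hτ.2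
      _ = 2 / ‖z‖ ^ 2 := by
          field_simp
  have key := norm_image_sub_le_of_norm_deriv_le_segment' hderiv hbound 1
    (by constructor <;> norm_num : (1:ℝ) ∈ Icc (0:ℝ) 1)
  have hf1 : f 1 = Complex.log (z + 1) - z⁻¹ := by simp [hf]
  have hf0 : f 0 = Complex.log z := by simp [hf]
  rw [hf1, hf0] at key
  have : Complex.log (z+1) - z⁻¹ - Complex.log z =
      Complex.log (z+1) - Complex.log z - z⁻¹ := by ring
  rw [this] at key
  simpa using key

theorem gamma_log_deriv_bound' :
    ∀ s : ℂ, (1 ≤ s.re ∨ 1 ≤ |s.im|) →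
      ‖deriv Complex.Gamma s / Complex.Gamma s - Complex.log s‖ ≤ 13 := by
  intro s hs
  have hregion : ∀ k : ℕ, 1 ≤ (s + (k:ℂ)).re ∨ 1 ≤ |(s + (k:ℂ)).im| := by
    intro k
    rcases hs with h | h
    · left
      simp only [Complex.add_re, Complex.natCast_re]
      have : (0:ℝ) ≤ k := Nat.cast_nonneg k
      linarith
    · right
      simpa [Complex.add_im] using h
  have hsj : ∀ j : ℕ, s + (j:ℂ) ≠ 0 := by
    intro j h
    have h1 := region_norm_ge_one (hregion j)
    rw [h] at h1
    simp at h1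
    linarith
  have hT := tendsto_logDeriv_gamma hsj
  -- bound on the telescoped sum
  have hsum : ∀ n : ℕ, ‖∑ j ∈ Finset.range (n+1),
      (Complex.log (s + j + 1) - Complex.log (s + j) - (s + (j:ℂ))⁻¹)‖ ≤ 12 := by
    intro n
    have step1 : ‖∑ j ∈ Finset.range (n+1),
        (Complex.log (s + j + 1) - Complex.log (s + j) - (s + (j:ℂ))⁻¹)‖ ≤
        ∑ j ∈ Finset.range (n+1), 2 / ‖s + (j:ℂ)‖ ^ 2 := by
      refine le_trans (norm_sum_le _ _) (Finset.sum_le_sum fun j _ => ?_)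
      simpa using term_bound (hregion j)
    refine step1.trans ?_
    rcases hs with h | h
    · have hptw : ∀ j ∈ Finset.range (n+1),
          2 / ‖s + (j:ℂ)‖ ^ 2 ≤ 2 * (1/((j:ℝ)^2+1)) := by
        intro j _
        have h1 : (1:ℝ) + j ≤ ‖s + j‖ := by
          have h2 : (s + (j:ℂ)).re ≤ ‖s + j‖ := Complex.re_le_norm _
          simp only [Complex.add_re, Complex.natCast_re] at h2
          linarith
        have h2 : (j:ℝ)^2 + 1 ≤ ‖s + j‖ ^ 2 := by
          have hj : (0:ℝ) ≤ j := Nat.cast_nonneg j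
          nlinarith
        rw [show (2:ℝ) * (1/((j:ℝ)^2+1)) = 2/((j:ℝ)^2+1) by ring]
        exact div_le_div_of_nonneg_left (by norm_num) (by positivity) h2
      refine (Finset.sum_le_sum hptw).trans ?_
      rw [← Finset.mul_sum]
      have := sum_inv_sq (n+1)
      linarith
    · have hptw : ∀ j ∈ Finset.range (n+1),
          2 / ‖s + (j:ℂ)‖ ^ 2 ≤ 2 * (1/((s.re+(j:ℝ))^2+1)) := by
        intro j _
        have h2 : (s.re+(j:ℝ))^2 + 1 ≤ ‖s + j‖ ^ 2 := by
          rw [Complex.sq_norm, Complex.normSq_apply]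
          simp only [Complex.add_re, Complex.add_im, Complex.natCast_re, Complex.natCast_im,
            add_zero]
          have him : 1 ≤ s.im ^ 2 := by
            have h2 : |s.im| ^ 2 = s.im ^ 2 := sq_abs s.im
            nlinarith [abs_nonneg s.im]
          nlinarith [him]
        rw [show (2:ℝ) * (1/((s.re+(j:ℝ))^2+1)) = 2/((s.re+(j:ℝ))^2+1) by ring]
        exact div_le_div_of_nonneg_left (by norm_num) (by positivity) h2
      refine (Finset.sum_le_sum hptw).trans ?_
      rw [← Finset.mul_sum]
      have := shifted_sum_bound s.re (n+1)
      linarith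
  -- telescoping identity
  have htel : ∀ n : ℕ,
      Complex.log n - ∑ j ∈ Finset.range (n+1), (s + (j:ℂ))⁻¹ - Complex.log s
      = (Complex.log n - Complex.log (s + ((n+1:ℕ):ℂ))) +
        ∑ j ∈ Finset.range (n+1),
          (Complex.log (s + j + 1) - Complex.log (s + j) - (s + (j:ℂ))⁻¹) := by
    intro n
    have hsum2 : ∑ j ∈ Finset.range (n+1),
        (Complex.log (s + j + 1) - Complex.log (s + j))
        = Complex.log (s + ((n+1:ℕ):ℂ)) - Complex.log s := by
      have hts := Finset.sum_range_sub (fun j : ℕ => Complex.log (s + (j:ℂ))) (n+1)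
      have heq : ∑ j ∈ Finset.range (n+1),
          (Complex.log (s + j + 1) - Complex.log (s + j)) =
          ∑ j ∈ Finset.range (n+1),
          (Complex.log (s + ((j+1:ℕ):ℂ)) - Complex.log (s + (j:ℂ))) := by
        apply Finset.sum_congr rfl
        intro j _
        push_cast
        ring_nf
      rw [heq, hts]
      simp
    have hsplit : ∑ j ∈ Finset.range (n+1),
        (Complex.log (s + j + 1) - Complex.log (s + j) - (s + (j:ℂ))⁻¹)
        = (∑ j ∈ Finset.range (n+1), (Complex.log (s + j + 1) - Complex.log (s + j)))
          - ∑ j ∈ Finset.range (n+1), (s + (j:ℂ))⁻¹ := by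
      rw [← Finset.sum_sub_distrib]
    rw [hsplit, hsum2]
    ring
  -- the head term tends to zero
  have hc : Tendsto (fun n : ℕ => Complex.log n - Complex.log (s + ((n+1:ℕ):ℂ)))
      atTop (𝓝 0) := by
    set w : ℕ → ℂ := fun n => (s + ((n+1:ℕ):ℂ)) / n with hw
    have hwlim : Tendsto w atTop (𝓝 1) := by
      have h1 : Tendsto (fun n : ℕ => (s+1) * ((n:ℂ))⁻¹ + 1) atTop (𝓝 1) := by
        have h0 : Tendsto (fun n : ℕ => ((n:ℂ))⁻¹) atTop (𝓝 0) := by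
          have := tendsto_inv_shift 0
          simpa using this
        have := (h0.const_mul (s+1)).add_const 1
        simpa using this
      apply h1.congr'
      filter_upwards [eventually_ge_atTop 1] with n hn
      have hn0 : (n:ℂ) ≠ 0 := Nat.cast_ne_zero.mpr (by omega)
      rw [hw]
      field_simp
      push_cast
      ring
    have hlog : Tendsto (fun n : ℕ => Complex.log (w n)) atTop (𝓝 0) := by
      have h1 : (1:ℂ) ∈ Complex.slitPlane := by
        rw [Complex.mem_slitPlane_iff]; left; norm_num
      have := hwlim.clog h1
      simpa using this
    have heq : ∀ᶠ n : ℕ in atTop,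
        Complex.log n - Complex.log (s + ((n+1:ℕ):ℂ)) = -(Complex.log (w n)) := by
      filter_upwards [eventually_ge_atTop 1] with n hn
      have hn0 : (n:ℂ) ≠ 0 := Nat.cast_ne_zero.mpr (by omega)
      have hwne : w n ≠ 0 := by
        rw [hw]
        exact div_ne_zero (hsj (n+1)) hn0
      have hmul : s + ((n+1:ℕ):ℂ) = (n:ℂ) * w n := by
        rw [hw]
        field_simp
      have harg : (n:ℂ).arg + (w n).arg ∈ Set.Ioc (-Real.pi) Real.pi := by
        rw [Complex.natCast_arg]
        simpa using Complex.arg_mem_Ioc (w n)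
      rw [hmul, Complex.log_mul hn0 hwne harg]
      ring
    have hlim : Tendsto (fun n : ℕ => -(Complex.log (w n))) atTop (𝓝 0) := by
      simpa using hlog.neg
    exact hlim.congr' (by filter_upwards [heq] with n h; rw [h])
  -- conclude
  have hT' : Tendsto (fun n : ℕ => Complex.log n - ∑ j ∈ Finset.range (n+1), (s + (j:ℂ))⁻¹
      - Complex.log s) atTop (𝓝 (logDeriv Complex.Gamma s - Complex.log s)) :=
    hT.sub_const _
  have hnormlim : Tendsto (fun n : ℕ => ‖Complex.log n -
      ∑ j ∈ Finset.range (n+1), (s + (j:ℂ))⁻¹ - Complex.log s‖) atTop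
      (𝓝 ‖logDeriv Complex.Gamma s - Complex.log s‖) := hT'.norm
  have hbound : ∀ᶠ n : ℕ in atTop, ‖Complex.log n -
      ∑ j ∈ Finset.range (n+1), (s + (j:ℂ))⁻¹ - Complex.log s‖ ≤ 13 := by
    have hcn : Tendsto (fun n : ℕ => ‖Complex.log n - Complex.log (s + ((n+1:ℕ):ℂ))‖)
        atTop (𝓝 0) := by simpa using hc.norm
    filter_upwards [hcn.eventually_lt_const (by norm_num : (0:ℝ) < 1)] with n hn
    rw [htel n]
    calc ‖_ + _‖ ≤ ‖Complex.log n - Complex.log (s + ((n+1:ℕ):ℂ))‖ +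
        ‖∑ j ∈ Finset.range (n+1),
          (Complex.log (s + j + 1) - Complex.log (s + j) - (s + (j:ℂ))⁻¹)‖ := norm_add_le _ _
      _ ≤ 1 + 12 := add_le_add (le_of_lt hn) (hsum n)
      _ = 13 := by norm_num
  have hfinal := le_of_tendsto hnormlim hbound
  rw [← logDeriv_apply]
  exact hfinal

end GammaLogDerivAux


/-- Lemma 1: `Γ'/Γ(s) = log s + O(1)` outside
`D = {Re s < 1, |Im s| < 1}`. -/
theorem gamma_log_deriv_bound :
    ∃ C : ℝ, 0 < C ∧ ∀ s : ℂ, (1 ≤ s.re ∨ 1 ≤ |s.im|) →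
      ‖deriv Complex.Gamma s / Complex.Gamma s - Complex.log s‖ ≤ C :=
  ⟨13, by norm_num, gamma_log_deriv_bound'⟩

end
end

section
/- (Lemma 2.) For every κ ≥ 0 there exists a constant C = C(κ) > 0 such that for all real numbers a, b with 1 ≤ a ≤ b and every τ ∈ (0,1] the sum Σ_{a ≤ n ≤ b} (log n)^κ/(1+τ²n²) over integers n is bounded by: C·(b−a+1)·(log b)^κ if b ≤ 1/τ; C·τ^{−1}·(log(2/τ))^κ if a ≤ 1/τ ≤ b; and C·(τ²a)^{−1}·(log(2a))^κ if 1/τ ≤ a. -/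
open Complex MeasureTheory
open scoped Real Classical

noncomputable section

private lemma tele (f g : ℕ → ℝ) (m : ℕ)
    (h : ∀ n, m < n → f n ≤ g (n - 1) - g n) :
    ∀ M, m ≤ M → ∑ n ∈ Finset.Icc m M, f n ≤ f m + g m - g M := by
  refine Nat.le_induction ?_ ?_
  · simp
  · intro M hM ih
    rw [Finset.sum_Icc_succ_top (le_trans hM (Nat.le_succ M))]
    have h1 := h (M + 1) (Nat.lt_succ_of_le hM)
    simp only [Nat.add_sub_cancel] at h1
    linarith

private lemma sum_inv_sq_s8 (m : ℕ) (hm : 1 ≤ m) (M : ℕ) :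
    ∑ n ∈ Finset.Icc m M, ((n : ℝ) ^ 2)⁻¹ ≤ 2 / m := by
  have hm' : (1 : ℝ) ≤ m := by exact_mod_cast hm
  rcases lt_or_ge M m with h | h
  · rw [Finset.Icc_eq_empty (by omega)]
    simp
    positivity
  · have key : ∀ n, m < n → ((n : ℝ) ^ 2)⁻¹ ≤ ((n - 1 : ℕ) : ℝ)⁻¹ - ((n : ℝ))⁻¹ := by
      intro n hn
      have h2 : (2 : ℕ) ≤ n := by omega
      have h2' : (2 : ℝ) ≤ n := by exact_mod_cast h2
      rw [Nat.cast_sub (by omega), Nat.cast_one]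
      have hpos : (0:ℝ) < (n:ℝ) - 1 := by linarith
      have e : ((n:ℝ) - 1)⁻¹ - ((n:ℝ))⁻¹ = (((n:ℝ) - 1) * n)⁻¹ := by
        field_simp
        ring
      rw [e]
      apply inv_anti₀ (by nlinarith)
      nlinarith
    have := tele (fun n => ((n : ℝ) ^ 2)⁻¹) (fun n => ((n : ℝ))⁻¹) m key M h
    have hM : (0:ℝ) < M := by
      have : (1:ℕ) ≤ M := le_trans hm h
      exact_mod_cast Nat.lt_of_lt_of_le Nat.zero_lt_one this
    have h3 : ((m : ℝ) ^ 2)⁻¹ ≤ (m : ℝ)⁻¹ := by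
      rw [inv_le_inv₀ (by positivity) (by positivity)]
      nlinarith
    have h4 : (0:ℝ) ≤ ((M : ℝ))⁻¹ := by positivity
    have : ∑ n ∈ Finset.Icc m M, ((n : ℝ) ^ 2)⁻¹ ≤ (m:ℝ)⁻¹ + (m:ℝ)⁻¹ := by linarith
    rw [div_eq_mul_inv]
    linarith

private lemma sum_inv_cube (m : ℕ) (hm : 1 ≤ m) (M : ℕ) :
    ∑ n ∈ Finset.Icc m M, ((n : ℝ) * Real.sqrt n)⁻¹ ≤ 3 / Real.sqrt m := by
  have hm' : (1 : ℝ) ≤ m := by exact_mod_cast hm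
  have hsm : (1:ℝ) ≤ Real.sqrt m := by
    rw [show (1:ℝ) = Real.sqrt 1 by simp]
    exact Real.sqrt_le_sqrt hm'
  rcases lt_or_ge M m with h | h
  · rw [Finset.Icc_eq_empty (by omega)]
    simp
    positivity
  · have key : ∀ n, m < n →
        ((n : ℝ) * Real.sqrt n)⁻¹ ≤ 2 * (Real.sqrt ((n - 1 : ℕ) : ℝ))⁻¹ - 2 * (Real.sqrt n)⁻¹ := by
      intro n hn
      have h2 : (2 : ℕ) ≤ n := by omega
      have h2' : (2 : ℝ) ≤ n := by exact_mod_cast h2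
      rw [Nat.cast_sub (by omega), Nat.cast_one]
      set s := Real.sqrt ((n:ℝ) - 1) with hs
      set t := Real.sqrt (n:ℝ) with ht
      have hs2 : s ^ 2 = (n:ℝ) - 1 := Real.sq_sqrt (by linarith)
      have ht2 : t ^ 2 = (n:ℝ) := Real.sq_sqrt (by linarith)
      have hs1 : 1 ≤ s := by nlinarith [Real.sqrt_nonneg ((n:ℝ) - 1)]
      have hst : s ≤ t := Real.sqrt_le_sqrt (by linarith)
      have ht0 : 0 < t := by linarith
      have hgoal : ((n:ℝ) * t)⁻¹ ≤ 2 * s⁻¹ - 2 * t⁻¹ := by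
        rw [show 2 * s⁻¹ - 2 * t⁻¹ = 2 * (t - s) / (s * t) by field_simp]
        rw [inv_eq_one_div, div_le_div_iff₀ (by nlinarith) (by nlinarith)]
        have hts : (t - s) * (t + s) = 1 := by nlinarith
        have hts0 : 0 < t + s := by linarith
        have e : t - s = 1 / (t + s) := by
          rw [eq_div_iff (ne_of_gt hts0)]; linarith [hts]
        rw [e, show 2 * (1 / (t + s)) * ((n:ℝ) * t) = 2 * (n:ℝ) * t / (t + s) by ring,
          le_div_iff₀ hts0]
        nlinarith [mul_le_mul_of_nonneg_right hst (mul_nonneg ht0.le ht0.le)]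
      exact hgoal
    have := tele (fun n => ((n : ℝ) * Real.sqrt n)⁻¹)
      (fun n => 2 * (Real.sqrt n)⁻¹) m key M h
    have h3 : ((m : ℝ) * Real.sqrt m)⁻¹ ≤ (Real.sqrt m)⁻¹ := by
      apply inv_anti₀ (by positivity)
      nlinarith
    have h4 : (0:ℝ) ≤ 2 * (Real.sqrt M)⁻¹ := by positivity
    rw [div_eq_mul_inv]
    linarith

private lemma log_rpow_le_sqrt (κ : ℝ) (hκ : 0 ≤ κ) :
    ∃ A : ℝ, 0 < A ∧ ∀ x : ℝ, 1 ≤ x → Real.log x ^ κ ≤ A * Real.sqrt x := by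
  set c := max κ 1 with hc
  have hc1 : (1:ℝ) ≤ c := le_max_right _ _
  have hc0 : (0:ℝ) < c := lt_of_lt_of_le one_pos hc1
  refine ⟨(2 * c) ^ κ, by positivity, fun x hx => ?_⟩
  have hx0 : (0:ℝ) < x := lt_of_lt_of_le one_pos hx
  have h1 : Real.log x ≤ 2 * c * x ^ (1 / (2 * c)) := by
    have e1 : Real.log (x ^ (1 / (2 * c))) = (1 / (2 * c)) * Real.log x :=
      Real.log_rpow hx0 _
    have e2 : Real.log (x ^ (1 / (2 * c))) ≤ x ^ (1 / (2 * c)) :=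
      Real.log_le_self (by positivity)
    have h2c : (0:ℝ) < 2 * c := by linarith
    calc Real.log x = 2 * c * ((1 / (2 * c)) * Real.log x) := by field_simp
      _ = 2 * c * Real.log (x ^ (1 / (2 * c))) := by rw [e1]
      _ ≤ 2 * c * x ^ (1 / (2 * c)) := by nlinarith [e2]
  calc Real.log x ^ κ ≤ (2 * c * x ^ (1 / (2 * c))) ^ κ :=
        Real.rpow_le_rpow (Real.log_nonneg hx) h1 hκ
    _ = (2 * c) ^ κ * (x ^ (1 / (2 * c))) ^ κ :=
        Real.mul_rpow (by positivity) (by positivity)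
    _ = (2 * c) ^ κ * x ^ (1 / (2 * c) * κ) := by rw [← Real.rpow_mul hx0.le]
    _ ≤ (2 * c) ^ κ * x ^ (1 / 2 : ℝ) := by
        have hle : 1 / (2 * c) * κ ≤ 1 / 2 := by
          rw [div_mul_eq_mul_div, div_le_div_iff₀ (by linarith) (by norm_num)]
          have : κ ≤ c := le_max_left _ _
          nlinarith
        exact mul_le_mul_of_nonneg_left
          (Real.rpow_le_rpow_of_exponent_le hx hle) (by positivity)
    _ = (2 * c) ^ κ * Real.sqrt x := by rw [Real.sqrt_eq_rpow]

private lemma rpow_add_le' (κ : ℝ) (hκ : 0 ≤ κ) (u v : ℝ) (hu : 0 ≤ u) (hv : 0 ≤ v) :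
    (u + v) ^ κ ≤ 2 ^ κ * (u ^ κ + v ^ κ) := by
  have h : u + v ≤ 2 * max u v := by
    rcases le_total u v with h | h
    · rw [max_eq_right h]; linarith
    · rw [max_eq_left h]; linarith
  calc (u + v) ^ κ ≤ (2 * max u v) ^ κ :=
        Real.rpow_le_rpow (by positivity) h hκ
    _ = 2 ^ κ * (max u v) ^ κ :=
        Real.mul_rpow (by norm_num) (le_max_of_le_left hu)
    _ ≤ 2 ^ κ * (u ^ κ + v ^ κ) := by
        apply mul_le_mul_of_nonneg_left _ (by positivity)
        rcases le_total u v with h | h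
        · rw [max_eq_right h]
          nlinarith [Real.rpow_nonneg hu κ]
        · rw [max_eq_left h]
          nlinarith [Real.rpow_nonneg hv κ]

private lemma tail_sum (κ : ℝ) (hκ : 0 ≤ κ) :
    ∃ B : ℝ, 0 < B ∧ ∀ N : ℝ, 1 ≤ N → ∀ s : Finset ℕ, (∀ n ∈ s, N ≤ (n : ℝ)) →
      ∑ n ∈ s, Real.log n ^ κ / (n : ℝ) ^ 2 ≤ B * Real.log (2 * N) ^ κ / N := by
  obtain ⟨A, hA, hAle⟩ := log_rpow_le_sqrt κ hκ
  have hlog2pos : (0:ℝ) < Real.log 2 := Real.log_pos (by norm_num)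
  have hl2pos : (0:ℝ) < Real.log 2 ^ κ := Real.rpow_pos_of_pos hlog2pos κ
  refine ⟨2 ^ κ * (2 + 3 * A / Real.log 2 ^ κ), by positivity, fun N hN s hs => ?_⟩
  set L := Real.log (2 * N) with hLdef
  have hN0 : (0:ℝ) < N := by linarith
  have hlog2L : Real.log 2 ≤ L := Real.log_le_log (by norm_num) (by linarith)
  have hL0 : (0:ℝ) < L := lt_of_lt_of_le hlog2pos hlog2L
  have hsqN : (0:ℝ) < Real.sqrt N := Real.sqrt_pos.mpr hN0
  -- pointwise bound
  have hterm : ∀ n ∈ s, Real.log n ^ κ / (n : ℝ) ^ 2 ≤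
      2 ^ κ * L ^ κ * ((n : ℝ) ^ 2)⁻¹ +
        2 ^ κ * A / Real.sqrt N * ((n : ℝ) * Real.sqrt n)⁻¹ := by
    intro n hn
    have hNn : N ≤ (n : ℝ) := hs n hn
    have hn1 : (1:ℝ) ≤ (n : ℝ) := le_trans hN hNn
    have hn0 : (0:ℝ) < (n : ℝ) := by linarith
    have hsqn : (0:ℝ) < Real.sqrt n := Real.sqrt_pos.mpr hn0
    have hlogsplit : Real.log n ≤ L + Real.log ((n : ℝ) / N) := by
      have e := Real.log_div (ne_of_gt hn0) (ne_of_gt hN0)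
      have h2 : Real.log N ≤ L := Real.log_le_log hN0 (by linarith)
      linarith
    have hq1 : (1:ℝ) ≤ (n : ℝ) / N := (one_le_div hN0).mpr hNn
    have hlogq0 : 0 ≤ Real.log ((n : ℝ) / N) := Real.log_nonneg hq1
    have h3 : Real.log n ^ κ ≤ (L + Real.log ((n : ℝ) / N)) ^ κ :=
      Real.rpow_le_rpow (Real.log_nonneg hn1) hlogsplit hκ
    have h4 := rpow_add_le' κ hκ L (Real.log ((n : ℝ) / N)) hL0.le hlogq0
    have h5 : Real.log ((n : ℝ) / N) ^ κ ≤ A * (Real.sqrt n / Real.sqrt N) := by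
      have := hAle _ hq1
      rwa [Real.sqrt_div (by positivity) N] at this
    have hlogn : Real.log n ^ κ ≤
        2 ^ κ * L ^ κ + 2 ^ κ * A * (Real.sqrt n / Real.sqrt N) := by
      have h6 : (L + Real.log ((n : ℝ) / N)) ^ κ ≤
          2 ^ κ * (L ^ κ + A * (Real.sqrt n / Real.sqrt N)) := by
        refine le_trans h4 (mul_le_mul_of_nonneg_left (add_le_add (le_refl _) h5) (by positivity))
      calc Real.log n ^ κ ≤ (L + Real.log ((n : ℝ) / N)) ^ κ := h3
        _ ≤ 2 ^ κ * (L ^ κ + A * (Real.sqrt n / Real.sqrt N)) := h6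
        _ = 2 ^ κ * L ^ κ + 2 ^ κ * A * (Real.sqrt n / Real.sqrt N) := by ring
    have hsq : Real.sqrt n / (n : ℝ) ^ 2 = ((n : ℝ) * Real.sqrt n)⁻¹ := by
      rw [inv_eq_one_div, div_eq_div_iff (by positivity) (by positivity)]
      rw [show Real.sqrt (n:ℝ) * ((n:ℝ) * Real.sqrt (n:ℝ))
          = (n:ℝ) * (Real.sqrt (n:ℝ) * Real.sqrt (n:ℝ)) by ring, Real.mul_self_sqrt hn0.le]
      ring
    calc Real.log n ^ κ / (n : ℝ) ^ 2
        ≤ (2 ^ κ * L ^ κ + 2 ^ κ * A * (Real.sqrt n / Real.sqrt N)) / (n : ℝ) ^ 2 := by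
          gcongr
      _ = 2 ^ κ * L ^ κ * ((n : ℝ) ^ 2)⁻¹ +
          2 ^ κ * A / Real.sqrt N * (Real.sqrt n / (n : ℝ) ^ 2) := by ring
      _ = 2 ^ κ * L ^ κ * ((n : ℝ) ^ 2)⁻¹ +
          2 ^ κ * A / Real.sqrt N * ((n : ℝ) * Real.sqrt n)⁻¹ := by rw [hsq]
  -- sum bounds
  set m := ⌈N⌉₊ with hmdef
  have hm1 : 1 ≤ m := Nat.one_le_ceil_iff.mpr (by linarith)
  have hNm : N ≤ (m : ℝ) := Nat.le_ceil N
  have hsub : s ⊆ Finset.Icc m (s.sup id) := by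
    intro n hn
    rw [Finset.mem_Icc]
    exact ⟨Nat.ceil_le.mpr (hs n hn), Finset.le_sup (f := id) hn⟩
  have hsum1 : ∑ n ∈ s, ((n : ℝ) ^ 2)⁻¹ ≤ 2 / N := by
    calc ∑ n ∈ s, ((n : ℝ) ^ 2)⁻¹ ≤ ∑ n ∈ Finset.Icc m (s.sup id), ((n : ℝ) ^ 2)⁻¹ :=
          Finset.sum_le_sum_of_subset_of_nonneg hsub (fun i _ _ => by positivity)
      _ ≤ 2 / m := sum_inv_sq_s8 m hm1 _
      _ ≤ 2 / N := by gcongr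
  have hsum2 : ∑ n ∈ s, ((n : ℝ) * Real.sqrt n)⁻¹ ≤ 3 / Real.sqrt N := by
    calc ∑ n ∈ s, ((n : ℝ) * Real.sqrt n)⁻¹
        ≤ ∑ n ∈ Finset.Icc m (s.sup id), ((n : ℝ) * Real.sqrt n)⁻¹ :=
          Finset.sum_le_sum_of_subset_of_nonneg hsub (fun i _ _ => by positivity)
      _ ≤ 3 / Real.sqrt m := sum_inv_cube m hm1 _
      _ ≤ 3 / Real.sqrt N := by
          gcongr
  have hmain : ∑ n ∈ s, Real.log n ^ κ / (n : ℝ) ^ 2 ≤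
      2 ^ κ * L ^ κ * (2 / N) + 2 ^ κ * A / Real.sqrt N * (3 / Real.sqrt N) := by
    calc ∑ n ∈ s, Real.log n ^ κ / (n : ℝ) ^ 2
        ≤ ∑ n ∈ s, (2 ^ κ * L ^ κ * ((n : ℝ) ^ 2)⁻¹ +
            2 ^ κ * A / Real.sqrt N * ((n : ℝ) * Real.sqrt n)⁻¹) :=
          Finset.sum_le_sum hterm
      _ = 2 ^ κ * L ^ κ * ∑ n ∈ s, ((n : ℝ) ^ 2)⁻¹ +
          2 ^ κ * A / Real.sqrt N * ∑ n ∈ s, ((n : ℝ) * Real.sqrt n)⁻¹ := by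
          rw [Finset.sum_add_distrib, Finset.mul_sum, Finset.mul_sum]
      _ ≤ 2 ^ κ * L ^ κ * (2 / N) + 2 ^ κ * A / Real.sqrt N * (3 / Real.sqrt N) := by
          apply add_le_add
          · exact mul_le_mul_of_nonneg_left hsum1 (by positivity)
          · exact mul_le_mul_of_nonneg_left hsum2 (by positivity)
  have hNe : Real.sqrt N * Real.sqrt N = N := Real.mul_self_sqrt hN0.le
  have heq : 2 ^ κ * A / Real.sqrt N * (3 / Real.sqrt N) = 2 ^ κ * (3 * A) / N := by
    rw [div_mul_div_comm, hNe]; ring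
  rw [heq] at hmain
  have hl2L : Real.log 2 ^ κ ≤ L ^ κ := Real.rpow_le_rpow hlog2pos.le hlog2L hκ
  have h2κ : (0:ℝ) ≤ 2 ^ κ := (Real.rpow_pos_of_pos two_pos κ).le
  have hkey : 2 ^ κ * L ^ κ * (2 / N) + 2 ^ κ * (3 * A) / N ≤
      2 ^ κ * (2 + 3 * A / Real.log 2 ^ κ) * L ^ κ / N := by
    have e : 3 * A / Real.log 2 ^ κ * Real.log 2 ^ κ = 3 * A :=
      div_mul_cancel₀ _ (ne_of_gt hl2pos)
    have h7 : 3 * A ≤ 3 * A / Real.log 2 ^ κ * L ^ κ := by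
      have h9 := mul_le_mul_of_nonneg_left hl2L
        (show (0:ℝ) ≤ 3 * A / Real.log 2 ^ κ by positivity)
      rw [e] at h9
      exact h9
    rw [show 2 ^ κ * L ^ κ * (2 / N) + 2 ^ κ * (3 * A) / N
        = (2 ^ κ * 2 * L ^ κ + 2 ^ κ * (3 * A)) / N by ring]
    rw [div_le_div_iff₀ hN0 hN0]
    have h8 : 2 ^ κ * (3 * A) * N ≤ 2 ^ κ * (3 * A / Real.log 2 ^ κ * L ^ κ) * N :=
      mul_le_mul_of_nonneg_right (mul_le_mul_of_nonneg_left h7 h2κ) hN0.le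
    nlinarith [h8]
  linarith


/-- Lemma 2. -/
theorem lemma_two (κ : ℝ) (hκ : 0 ≤ κ) :
    ∃ C : ℝ, 0 < C ∧ ∀ a b : ℝ, 1 ≤ a → a ≤ b → ∀ τ : ℝ, 0 < τ → τ ≤ 1 →
      (b ≤ 1 / τ →
        (∑ n ∈ Finset.Icc ⌈a⌉₊ ⌊b⌋₊, (Real.log n) ^ κ / (1 + τ ^ 2 * (n : ℝ) ^ 2)) ≤
          C * (b - a + 1) * (Real.log b) ^ κ) ∧
      (a ≤ 1 / τ → 1 / τ ≤ b →
        (∑ n ∈ Finset.Icc ⌈a⌉₊ ⌊b⌋₊, (Real.log n) ^ κ / (1 + τ ^ 2 * (n : ℝ) ^ 2)) ≤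
          C * τ⁻¹ * (Real.log (2 / τ)) ^ κ) ∧
      (1 / τ ≤ a →
        (∑ n ∈ Finset.Icc ⌈a⌉₊ ⌊b⌋₊, (Real.log n) ^ κ / (1 + τ ^ 2 * (n : ℝ) ^ 2)) ≤
          C / (τ ^ 2 * a) * (Real.log (2 * a)) ^ κ) := by
  obtain ⟨B, hB, hBtail⟩ := tail_sum κ hκ
  refine ⟨B + 1, by linarith, fun a b ha hab τ hτ0 hτ1 => ?_⟩
  have ha0 : (0:ℝ) < a := by linarith
  have hb1 : (1:ℝ) ≤ b := le_trans ha hab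
  have hb0 : (0:ℝ) < b := by linarith
  have hτinv1 : (1:ℝ) ≤ 1 / τ := by rw [le_div_iff₀ hτ0]; linarith
  have hτ2 : (0:ℝ) < τ ^ 2 := pow_pos hτ0 2
  have hceil1 : 1 ≤ ⌈a⌉₊ := Nat.one_le_ceil_iff.mpr ha0
  have hmem : ∀ n ∈ Finset.Icc ⌈a⌉₊ ⌊b⌋₊, (1:ℝ) ≤ (n:ℝ) ∧ a ≤ (n:ℝ) ∧ (n:ℝ) ≤ b := by
    intro n hn
    rw [Finset.mem_Icc] at hn
    have h1 : a ≤ (n:ℝ) := le_trans (Nat.le_ceil a) (by exact_mod_cast hn.1)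
    have h2 : (n:ℝ) ≤ b :=
      le_trans (by exact_mod_cast hn.2) (Nat.floor_le hb0.le)
    exact ⟨by linarith, h1, h2⟩
  have hstep : ∀ n : ℕ, (1:ℝ) ≤ (n:ℝ) →
      Real.log n ^ κ / (1 + τ ^ 2 * (n:ℝ) ^ 2) ≤
        (τ ^ 2)⁻¹ * (Real.log n ^ κ / (n:ℝ) ^ 2) := by
    intro n hn1
    have hn0 : (0:ℝ) < (n:ℝ) := by linarith
    have hx : 0 ≤ Real.log n ^ κ := Real.rpow_nonneg (Real.log_nonneg hn1) κ
    rw [show (τ ^ 2)⁻¹ * (Real.log n ^ κ / (n:ℝ) ^ 2)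
        = Real.log n ^ κ / (τ ^ 2 * (n:ℝ) ^ 2) by field_simp]
    rw [div_le_div_iff₀ (by positivity) (mul_pos hτ2 (pow_pos hn0 2))]
    nlinarith [hx, mul_nonneg hx (mul_pos hτ2 (pow_pos hn0 2)).le]
  have hdenom1 : ∀ n : ℕ, (1:ℝ) ≤ 1 + τ ^ 2 * (n:ℝ) ^ 2 := by
    intro n
    nlinarith [sq_nonneg (τ * (n:ℝ))]
  refine ⟨?_, ?_, ?_⟩
  -- Case 1 : b ≤ 1/τ
  · intro hbτ
    have hlogb : 0 ≤ Real.log b := Real.log_nonneg hb1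
    have hXb : 0 ≤ Real.log b ^ κ := Real.rpow_nonneg hlogb κ
    have hterm : ∀ n ∈ Finset.Icc ⌈a⌉₊ ⌊b⌋₊,
        Real.log n ^ κ / (1 + τ ^ 2 * (n:ℝ) ^ 2) ≤ Real.log b ^ κ := by
      intro n hn
      obtain ⟨h1, _, h2⟩ := hmem n hn
      calc Real.log n ^ κ / (1 + τ ^ 2 * (n:ℝ) ^ 2) ≤ Real.log n ^ κ :=
            div_le_self (Real.rpow_nonneg (Real.log_nonneg h1) κ) (hdenom1 n)
        _ ≤ Real.log b ^ κ :=
            Real.rpow_le_rpow (Real.log_nonneg h1)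
              (Real.log_le_log (by linarith) h2) hκ
    have hsum := Finset.sum_le_card_nsmul _ _ _ hterm
    rw [nsmul_eq_mul] at hsum
    have hcard : ((Finset.Icc ⌈a⌉₊ ⌊b⌋₊).card : ℝ) ≤ b - a + 1 := by
      rw [Nat.card_Icc]
      have h1 : ⌈a⌉₊ ≤ ⌊b⌋₊ + 1 :=
        le_trans (Nat.ceil_le_ceil hab) (Nat.ceil_le_floor_add_one b)
      rw [Nat.cast_sub h1]
      push_cast
      have h2 : (⌊b⌋₊ : ℝ) ≤ b := Nat.floor_le hb0.le
      have h3 : a ≤ (⌈a⌉₊ : ℝ) := Nat.le_ceil a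
      linarith
    have h4 : ((Finset.Icc ⌈a⌉₊ ⌊b⌋₊).card : ℝ) * Real.log b ^ κ ≤
        (b - a + 1) * Real.log b ^ κ := mul_le_mul_of_nonneg_right hcard hXb
    have h5 : (b - a + 1) * Real.log b ^ κ ≤ (B + 1) * (b - a + 1) * Real.log b ^ κ := by
      nlinarith [mul_nonneg (mul_nonneg hB.le (show (0:ℝ) ≤ b - a + 1 by linarith)) hXb]
    linarith
  -- Case 2 : a ≤ 1/τ ≤ b
  · intro haτ hbτ
    have h2τ1 : (1:ℝ) ≤ 2 / τ := by
      rw [le_div_iff₀ hτ0]; linarith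
    have hX0 : 0 ≤ Real.log (2 / τ) ^ κ :=
      Real.rpow_nonneg (Real.log_nonneg h2τ1) κ
    set K := ⌊1 / τ⌋₊ with hKdef
    have hKτ : (K : ℝ) ≤ 1 / τ := Nat.floor_le (by positivity)
    have hτK : 1 / τ < (K : ℝ) + 1 := by exact_mod_cast Nat.lt_floor_add_one (1 / τ)
    rw [← Finset.sum_filter_add_sum_filter_not (Finset.Icc ⌈a⌉₊ ⌊b⌋₊) (fun n => n ≤ K)]
    have h1 : ∑ n ∈ (Finset.Icc ⌈a⌉₊ ⌊b⌋₊).filter (fun n => n ≤ K),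
        Real.log n ^ κ / (1 + τ ^ 2 * (n:ℝ) ^ 2) ≤ (1 / τ) * Real.log (2 / τ) ^ κ := by
      have hterm : ∀ n ∈ (Finset.Icc ⌈a⌉₊ ⌊b⌋₊).filter (fun n => n ≤ K),
          Real.log n ^ κ / (1 + τ ^ 2 * (n:ℝ) ^ 2) ≤ Real.log (2 / τ) ^ κ := by
        intro n hn
        rw [Finset.mem_filter] at hn
        obtain ⟨h1', _, _⟩ := hmem n hn.1
        have hn2τ : (n : ℝ) ≤ 2 / τ := by
          have : (n : ℝ) ≤ K := by exact_mod_cast hn.2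
          have h12 : 1 / τ ≤ 2 / τ := by
            rw [div_le_div_iff₀ hτ0 hτ0]; nlinarith
          linarith
        calc Real.log n ^ κ / (1 + τ ^ 2 * (n:ℝ) ^ 2) ≤ Real.log n ^ κ :=
              div_le_self (Real.rpow_nonneg (Real.log_nonneg h1') κ) (hdenom1 n)
          _ ≤ Real.log (2 / τ) ^ κ :=
              Real.rpow_le_rpow (Real.log_nonneg h1')
                (Real.log_le_log (by linarith) hn2τ) hκ
      have hsum := Finset.sum_le_card_nsmul _ _ _ hterm
      rw [nsmul_eq_mul] at hsum
      have hcard : (((Finset.Icc ⌈a⌉₊ ⌊b⌋₊).filter (fun n => n ≤ K)).card : ℝ) ≤ 1 / τ := by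
        have hsub : (Finset.Icc ⌈a⌉₊ ⌊b⌋₊).filter (fun n => n ≤ K) ⊆ Finset.Icc 1 K := by
          intro n hn
          rw [Finset.mem_filter] at hn
          rw [Finset.mem_Icc]
          exact ⟨le_trans hceil1 (Finset.mem_Icc.mp hn.1).1, hn.2⟩
        have := Finset.card_le_card hsub
        rw [Nat.card_Icc] at this
        have h2 : ((Finset.Icc ⌈a⌉₊ ⌊b⌋₊).filter (fun n => n ≤ K)).card ≤ K := by omega
        calc (((Finset.Icc ⌈a⌉₊ ⌊b⌋₊).filter (fun n => n ≤ K)).card : ℝ) ≤ (K : ℝ) := by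
              exact_mod_cast h2
          _ ≤ 1 / τ := hKτ
      calc ∑ n ∈ (Finset.Icc ⌈a⌉₊ ⌊b⌋₊).filter (fun n => n ≤ K),
            Real.log n ^ κ / (1 + τ ^ 2 * (n:ℝ) ^ 2)
          ≤ (((Finset.Icc ⌈a⌉₊ ⌊b⌋₊).filter (fun n => n ≤ K)).card : ℝ) *
            Real.log (2 / τ) ^ κ := hsum
        _ ≤ (1 / τ) * Real.log (2 / τ) ^ κ := mul_le_mul_of_nonneg_right hcard hX0
    have h2 : ∑ n ∈ (Finset.Icc ⌈a⌉₊ ⌊b⌋₊).filter (fun n => ¬ n ≤ K),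
        Real.log n ^ κ / (1 + τ ^ 2 * (n:ℝ) ^ 2) ≤ B * (1 / τ) * Real.log (2 / τ) ^ κ := by
      have hs2 : ∀ n ∈ (Finset.Icc ⌈a⌉₊ ⌊b⌋₊).filter (fun n => ¬ n ≤ K), 1 / τ ≤ (n : ℝ) := by
        intro n hn
        rw [Finset.mem_filter] at hn
        have : K + 1 ≤ n := by omega
        have : (K : ℝ) + 1 ≤ (n : ℝ) := by exact_mod_cast this
        linarith
      have htail := hBtail (1 / τ) hτinv1 _ hs2
      rw [mul_one_div 2 τ] at htail
      have hsum2 : ∑ n ∈ (Finset.Icc ⌈a⌉₊ ⌊b⌋₊).filter (fun n => ¬ n ≤ K),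
          Real.log n ^ κ / (1 + τ ^ 2 * (n:ℝ) ^ 2) ≤
          (τ ^ 2)⁻¹ * ∑ n ∈ (Finset.Icc ⌈a⌉₊ ⌊b⌋₊).filter (fun n => ¬ n ≤ K),
            Real.log n ^ κ / (n:ℝ) ^ 2 := by
        rw [Finset.mul_sum]
        apply Finset.sum_le_sum
        intro n hn
        apply hstep
        have := hs2 n hn
        linarith
      have h3 : (τ ^ 2)⁻¹ * ∑ n ∈ (Finset.Icc ⌈a⌉₊ ⌊b⌋₊).filter (fun n => ¬ n ≤ K),
          Real.log n ^ κ / (n:ℝ) ^ 2 ≤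
          (τ ^ 2)⁻¹ * (B * Real.log (2 / τ) ^ κ / (1 / τ)) :=
        mul_le_mul_of_nonneg_left htail (by positivity)
      have he : (τ ^ 2)⁻¹ * (B * Real.log (2 / τ) ^ κ / (1 / τ)) =
          B * (1 / τ) * Real.log (2 / τ) ^ κ := by
        field_simp
      linarith [hsum2, h3, he ▸ h3]
    have hgoal : (1 / τ) * Real.log (2 / τ) ^ κ + B * (1 / τ) * Real.log (2 / τ) ^ κ
        = (B + 1) * τ⁻¹ * Real.log (2 / τ) ^ κ := by
      rw [one_div]
      ring
    linarith
  -- Case 3 : 1/τ ≤ a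
  · intro hτa
    have h2a1 : (1:ℝ) ≤ 2 * a := by linarith
    have hX0 : 0 ≤ Real.log (2 * a) ^ κ :=
      Real.rpow_nonneg (Real.log_nonneg h2a1) κ
    have htail := hBtail a ha _ (fun n hn => (hmem n hn).2.1)
    have hsum2 : ∑ n ∈ Finset.Icc ⌈a⌉₊ ⌊b⌋₊,
        Real.log n ^ κ / (1 + τ ^ 2 * (n:ℝ) ^ 2) ≤
        (τ ^ 2)⁻¹ * ∑ n ∈ Finset.Icc ⌈a⌉₊ ⌊b⌋₊, Real.log n ^ κ / (n:ℝ) ^ 2 := by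
      rw [Finset.mul_sum]
      apply Finset.sum_le_sum
      intro n hn
      exact hstep n (hmem n hn).1
    have h3 : (τ ^ 2)⁻¹ * ∑ n ∈ Finset.Icc ⌈a⌉₊ ⌊b⌋₊, Real.log n ^ κ / (n:ℝ) ^ 2 ≤
        (τ ^ 2)⁻¹ * (B * Real.log (2 * a) ^ κ / a) :=
      mul_le_mul_of_nonneg_left htail (by positivity)
    have he : (τ ^ 2)⁻¹ * (B * Real.log (2 * a) ^ κ / a) =
        B / (τ ^ 2 * a) * Real.log (2 * a) ^ κ := by
      field_simp
    have h4 : B / (τ ^ 2 * a) * Real.log (2 * a) ^ κ ≤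
        (B + 1) / (τ ^ 2 * a) * Real.log (2 * a) ^ κ := by
      apply mul_le_mul_of_nonneg_right _ hX0
      rw [div_le_div_iff₀ (mul_pos hτ2 ha0) (mul_pos hτ2 ha0)]
      nlinarith [mul_pos hτ2 ha0]
    linarith [hsum2, h3, he ▸ h3, h4]


end
end
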